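/- Let L > 0, ε > 0, and let f : [0,1] → ℝ be L-Lipschitz, i.e., |f(x) − f(y)| ≤ L·|x − y| for all x, y ∈ [0,1]. Then there exists a real polynomial q of degree at most ⌈12L/ε⌉ such that |f(x) − q(x)| ≤ ε/2 for all x ∈ [0,1]. -/

import Mathlib

open Real Finset MeasureTheory Polynomial

-- integral of cos(k t) over a period
lemma integral_cos_int (k : ℤ) :
    ∫ t in (-π)..π, Real.cos (k * t) = if k = 0 then 2 * π else 0 := by
  rcases eq_or_ne k 0 with hk | hk
  · simp [hk, two_mul]
  · have hk' : (k : ℝ) ≠ 0 := Int.cast_ne_zero.mpr hk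
    have h := intervalIntegral.integral_comp_mul_left (fun x => Real.cos x) hk' (a := -π) (b := π)
    rw [integral_cos] at h
    rw [if_neg hk, h]
    have h1 : Real.sin ((k:ℝ) * π) = 0 := Real.sin_int_mul_pi k
    have h2 : Real.sin ((k:ℝ) * (-π)) = 0 := by
      have : (k:ℝ) * (-π) = (-k : ℤ) * π := by push_cast; ring
      rw [this]; exact Real.sin_int_mul_pi (-k)
    rw [h1, h2]; simp

-- orthogonality
lemma integral_cos_mul_cos_int (a b : ℤ) :
    ∫ t in (-π)..π, Real.cos (a * t) * Real.cos (b * t)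
      = (if a = b then π else 0) + (if a = -b then π else 0) := by
  have hpt : ∀ t : ℝ, Real.cos (a * t) * Real.cos (b * t)
      = (Real.cos (((a+b : ℤ) : ℝ) * t) + Real.cos (((a-b : ℤ) : ℝ) * t)) / 2 := by
    intro t
    push_cast
    rw [add_mul, sub_mul, Real.cos_add, Real.cos_sub]
    ring
  rw [intervalIntegral.integral_congr (g := fun t => (Real.cos (((a+b : ℤ) : ℝ) * t) + Real.cos (((a-b : ℤ) : ℝ) * t)) / 2) (fun t _ => hpt t)]
  have i1 : IntervalIntegrable (fun t => Real.cos (((a+b : ℤ) : ℝ) * t)) MeasureTheory.volume (-π) π := by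
    apply Continuous.intervalIntegrable; fun_prop
  have i2 : IntervalIntegrable (fun t => Real.cos (((a-b : ℤ) : ℝ) * t)) MeasureTheory.volume (-π) π := by
    apply Continuous.intervalIntegrable; fun_prop
  rw [intervalIntegral.integral_div, intervalIntegral.integral_add i1 i2,
    integral_cos_int, integral_cos_int,
    if_congr (show a + b = 0 ↔ a = -b by omega) rfl rfl,
    if_congr (show a - b = 0 ↔ a = b by omega) rfl rfl]
  split_ifs <;> ring

-- integral of odd function vanishes
lemma integral_odd_pi {u : ℝ → ℝ} (hu : ∀ s, u (-s) = - u s) :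
    ∫ s in (-π)..π, u s = 0 := by
  have h := intervalIntegral.integral_comp_neg u (a := -π) (b := π)
  simp only [hu, intervalIntegral.integral_neg, neg_neg] at h
  linarith

-- integral of even function
lemma integral_even_pi {u : ℝ → ℝ} (hu : ∀ s, u (-s) = u s)
    (hc : Continuous u) :
    ∫ s in (-π)..π, u s = 2 * ∫ s in (0:ℝ)..π, u s := by
  have h := intervalIntegral.integral_comp_neg u (a := 0) (b := π)
  simp only [hu, neg_zero] at h
  have hsplit : ∫ s in (-π)..π, u s = (∫ s in (-π)..(0:ℝ), u s) + ∫ s in (0:ℝ)..π, u s :=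
    (intervalIntegral.integral_add_adjacent_intervals
      (hc.intervalIntegrable _ _) (hc.intervalIntegrable _ _)).symm
  rw [hsplit, ← h]; ring

noncomputable def FF (n : ℕ) (t : ℝ) : ℝ :=
  ∑ j ∈ Finset.range n, ∑ l ∈ Finset.range n, Real.cos ((((j:ℤ) - l : ℤ) : ℝ) * t)

lemma exp_mul_I_sub_one (x : ℝ) :
    Complex.exp (x * Complex.I) - 1
      = 2 * Complex.sin ((x:ℂ)/2) * Complex.exp (((x:ℂ)/2) * Complex.I) * Complex.I := by
  have key : ∀ y : ℂ, Complex.exp (2*y*Complex.I) - 1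
      = 2 * Complex.sin y * Complex.exp (y*Complex.I) * Complex.I := by
    intro y
    rw [Complex.exp_mul_I, Complex.exp_mul_I, Complex.sin_two_mul, Complex.cos_two_mul]
    linear_combination (2:ℂ) * Complex.sin_sq_add_cos_sq y - 2 * Complex.sin y^2 * Complex.I_sq
  have h := key ((x:ℂ)/2)
  rw [show 2*((x:ℂ)/2)*Complex.I = (x:ℂ)*Complex.I by ring] at h
  exact h

lemma abs_exp_mul_I_sub_one (x : ℝ) :
    ‖Complex.exp (x * Complex.I) - 1‖ = 2 * |Real.sin (x/2)| := by
  rw [exp_mul_I_sub_one]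
  have hcast : ((x:ℂ)/2) = ((x/2 : ℝ) : ℂ) := by push_cast; ring
  have h1 : ‖Complex.exp (((x:ℂ)/2) * Complex.I)‖ = 1 := by
    rw [hcast]; exact Complex.norm_exp_ofReal_mul_I _
  have h2 : ‖Complex.sin ((x:ℂ)/2)‖ = |Real.sin (x/2)| := by
    rw [hcast, ← Complex.ofReal_sin, Complex.norm_real, Real.norm_eq_abs]
  simp [map_mul, h1, h2]

lemma FF_eq_normSq (n : ℕ) (t : ℝ) :
    FF n t = Complex.normSq (∑ j ∈ Finset.range n, Complex.exp ((j * t : ℝ) * Complex.I)) := by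
  set D := ∑ j ∈ Finset.range n, Complex.exp ((j * t : ℝ) * Complex.I) with hD
  have hconj : (starRingEnd ℂ) D = ∑ l ∈ Finset.range n, Complex.exp (-((l * t : ℝ) * Complex.I)) := by
    rw [map_sum]
    refine Finset.sum_congr rfl fun l _ => ?_
    rw [← Complex.exp_conj]
    congr 1
    simp [Complex.conj_I, mul_comm]
  have hprod : D * (starRingEnd ℂ) D
      = ∑ j ∈ Finset.range n, ∑ l ∈ Finset.range n,
          Complex.exp (((j*t - l*t : ℝ)) * Complex.I) := by
    rw [hconj, Finset.sum_mul_sum]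
    refine Finset.sum_congr rfl fun j _ => Finset.sum_congr rfl fun l _ => ?_
    rw [← Complex.exp_add]
    congr 1
    push_cast
    ring
  have hns : (Complex.normSq D : ℝ) = (D * (starRingEnd ℂ) D).re := by
    rw [Complex.mul_conj]; simp
  rw [hns, hprod]
  rw [Complex.re_sum]
  unfold FF
  refine Finset.sum_congr rfl fun j _ => ?_
  rw [Complex.re_sum]
  refine Finset.sum_congr rfl fun l _ => ?_
  rw [Complex.exp_ofReal_mul_I_re]
  congr 1
  push_cast
  ring

lemma FF_nonneg (n : ℕ) (t : ℝ) : 0 ≤ FF n t := by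
  rw [FF_eq_normSq]; exact Complex.normSq_nonneg _

lemma FF_le_sq (n : ℕ) (t : ℝ) : FF n t ≤ (n:ℝ)^2 := by
  rw [FF_eq_normSq, Complex.normSq_eq_norm_sq]
  have habs1 : ∀ j : ℕ, ‖Complex.exp ((j * t : ℝ) * Complex.I)‖ = 1 :=
    fun j => Complex.norm_exp_ofReal_mul_I _
  have hle : ‖∑ j ∈ Finset.range n, Complex.exp ((j * t : ℝ) * Complex.I)‖ ≤ n := by
    refine (norm_sum_le _ _).trans ?_
    simp only [habs1]
    simp
  calc ‖_‖ ^ 2 ≤ (n:ℝ)^2 :=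
        pow_le_pow_left₀ (norm_nonneg _) hle 2

lemma FF_le_tail (n : ℕ) {t : ℝ} (ht0 : 0 < t) (htpi : t ≤ π) :
    FF n t ≤ π^2 / t^2 := by
  have hsin : t / π ≤ Real.sin (t/2) := by
    have h := Real.mul_le_sin (x := t/2) (by linarith) (by linarith)
    calc t/π = 2/π * (t/2) := by ring
      _ ≤ Real.sin (t/2) := h
  have hsinpos : 0 < Real.sin (t/2) := lt_of_lt_of_le (by positivity) hsin
  set z := Complex.exp ((t : ℝ) * Complex.I) with hz
  have hz1 : z - 1 ≠ 0 := by
    intro h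
    have h0 : ‖z - 1‖ = 0 := by rw [h]; simp
    rw [abs_exp_mul_I_sub_one t, abs_of_pos hsinpos] at h0
    linarith
  have hzne : z ≠ 1 := by intro h; apply hz1; rw [h]; ring
  have hgeom : ∑ j ∈ Finset.range n, Complex.exp ((j * t : ℝ) * Complex.I)
      = (z ^ n - 1) / (z - 1) := by
    rw [← geom_sum_eq hzne]
    refine Finset.sum_congr rfl fun j _ => ?_
    rw [← Complex.exp_nat_mul]
    congr 1
    push_cast
    ring
  rw [FF_eq_normSq, hgeom, Complex.normSq_eq_norm_sq]
  rw [norm_div]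
  have habs_z : ‖z‖ = 1 := Complex.norm_exp_ofReal_mul_I t
  have hnum : ‖z ^ n - 1‖ ≤ 2 := by
    refine (norm_sub_le _ _).trans ?_
    rw [norm_pow, habs_z]
    norm_num
  have hden : ‖z - 1‖ = 2 * |Real.sin (t/2)| := abs_exp_mul_I_sub_one t
  rw [hden, abs_of_pos hsinpos]
  have hquot : ‖z ^ n - 1‖ / (2 * Real.sin (t/2)) ≤ π / t := by
    have h2 : 2 * (t/π) ≤ 2 * Real.sin (t/2) := by linarith
    calc ‖z ^ n - 1‖ / (2 * Real.sin (t/2)) ≤ 2 / (2 * (t/π)) := by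
          apply div_le_div₀ (by norm_num) hnum (by positivity) h2
      _ = π / t := by
          rw [div_eq_div_iff (by positivity) (by positivity)]
          field_simp
  calc (‖z^n-1‖ / (2 * Real.sin (t/2)))^2 ≤ (π/t)^2 :=
        pow_le_pow_left₀ (by positivity) hquot 2
    _ = π^2/t^2 := by rw [div_pow]

lemma sum_indicator_eq (n : ℕ) (c : ℤ) :
    (∑ l' ∈ Finset.range n, if (l' : ℤ) = c then (1:ℝ) else 0)
      = if 0 ≤ c ∧ c < n then 1 else 0 := by
  by_cases h : 0 ≤ c ∧ c < n
  · rw [if_pos h]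
    have hc : c.toNat ∈ Finset.range n := Finset.mem_range.mpr (by omega)
    have : ∀ l' ∈ Finset.range n,
        (if (l' : ℤ) = c then (1:ℝ) else 0) = (if l' = c.toNat then (1:ℝ) else 0) := by
      intro l' _
      exact if_congr (by omega) rfl rfl
    rw [Finset.sum_congr rfl this, Finset.sum_ite_eq' (Finset.range n) c.toNat (fun _ => (1:ℝ)),
      if_pos hc]
  · rw [if_neg h]
    apply Finset.sum_eq_zero
    intro l' hl'
    rw [Finset.mem_range] at hl'
    exact if_neg (by omega)

lemma abs_cast_diff (j j' : ℕ) :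
    |(j:ℝ) - j'| = ((j - j' : ℕ) : ℝ) + ((j' - j : ℕ) : ℝ) := by
  rcases le_total j j' with h | h
  · have hc : (j:ℝ) ≤ j' := Nat.cast_le.mpr h
    rw [Nat.sub_eq_zero_of_le h, abs_of_nonpos (by linarith)]
    push_cast [Nat.cast_sub h]
    ring
  · have hc : (j':ℝ) ≤ j := Nat.cast_le.mpr h
    rw [Nat.sub_eq_zero_of_le h, abs_of_nonneg (by linarith)]
    push_cast [Nat.cast_sub h]
    ring

lemma inner_count (n j j' : ℕ) (hj : j < n) (hj' : j' < n) :
    (n:ℝ) - |(j:ℝ) - j'| ≤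
      ∑ l ∈ Finset.range n, ∑ l' ∈ Finset.range n,
        (if (j:ℤ) - l = (j':ℤ) - l' then (1:ℝ) else 0) := by
  have hstep : ∀ l : ℕ, (∑ l' ∈ Finset.range n,
      (if (j:ℤ) - l = (j':ℤ) - l' then (1:ℝ) else 0))
      = if 0 ≤ (l:ℤ) + j' - j ∧ (l:ℤ) + j' - j < n then 1 else 0 := by
    intro l
    rw [← sum_indicator_eq n ((l:ℤ) + j' - j)]
    refine Finset.sum_congr rfl fun l' _ => if_congr (by omega) rfl rfl
  simp only [hstep]
  have hcardform : (∑ l ∈ Finset.range n,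
      if 0 ≤ (l:ℤ) + j' - j ∧ (l:ℤ) + j' - j < n then (1:ℝ) else 0)
      = ((Finset.range n).filter (fun l : ℕ => 0 ≤ (l:ℤ) + j' - j ∧ (l:ℤ) + j' - j < (n:ℤ))).card := by
    rw [Finset.card_filter]
    push_cast
    rfl
  rw [hcardform]
  have hsub : Finset.Ico (j - j') (n - (j' - j)) ⊆
      (Finset.range n).filter (fun l : ℕ => 0 ≤ (l:ℤ) + j' - j ∧ (l:ℤ) + j' - j < (n:ℤ)) := by
    intro u hu
    rw [Finset.mem_Ico] at hu
    rw [Finset.mem_filter, Finset.mem_range]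
    omega
  have hcard : n - (j' - j) - (j - j') ≤
      ((Finset.range n).filter (fun l : ℕ => 0 ≤ (l:ℤ) + j' - j ∧ (l:ℤ) + j' - j < (n:ℤ))).card := by
    have := Finset.card_le_card hsub
    rw [Nat.card_Ico] at this
    omega
  rw [abs_cast_diff]
  have hcast : ((n - (j' - j) - (j - j') : ℕ) : ℝ) = (n:ℝ) - ((j' - j : ℕ) : ℝ) - ((j - j' : ℕ) : ℝ) := by
    have h1 : (n - (j' - j) - (j - j') : ℕ) + (j' - j) + (j - j') = n := by omega
    have := congrArg (fun m : ℕ => (m : ℝ)) h1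
    push_cast at this
    linarith
  calc (n:ℝ) - (((j - j' : ℕ) : ℝ) + ((j' - j : ℕ) : ℝ))
      = ((n - (j' - j) - (j - j') : ℕ) : ℝ) := by rw [hcast]; ring
    _ ≤ _ := Nat.cast_le.mpr hcard

lemma gauss_real (m : ℕ) : ∑ j ∈ Finset.range m, (j:ℝ) = m * (m - 1) / 2 := by
  induction m with
  | zero => simp
  | succ k ih =>
    rw [Finset.sum_range_succ, ih]
    push_cast
    ring

lemma sum_abs_diff (n : ℕ) :
    ∑ j ∈ Finset.range n, ∑ j' ∈ Finset.range n, |(j:ℝ) - j'| = ((n:ℝ)^3 - n)/3 := by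
  induction n with
  | zero => simp
  | succ n ih =>
    have hrow : ∀ m : ℕ, m ≤ n → ∑ j ∈ Finset.range m, |(j:ℝ) - n| = n * m - m*(m-1)/2 := by
      intro m hm
      have : ∀ j ∈ Finset.range m, |(j:ℝ) - n| = (n:ℝ) - j := by
        intro j hj
        rw [Finset.mem_range] at hj
        rw [abs_of_nonpos (by
          have : (j:ℝ) ≤ n := Nat.cast_le.mpr (by omega)
          linarith)]
        ring
      rw [Finset.sum_congr rfl this, Finset.sum_sub_distrib, Finset.sum_const, gauss_real]
      simp [mul_comm]
    simp only [Finset.sum_range_succ]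
    rw [Finset.sum_add_distrib, ih, hrow n le_rfl]
    have hcomm : ∑ j' ∈ Finset.range n, |(n:ℝ) - j'| = ∑ j' ∈ Finset.range n, |(j':ℝ) - n| :=
      Finset.sum_congr rfl fun _ _ => abs_sub_comm _ _
    rw [hcomm, hrow n le_rfl]
    simp only [sub_self, abs_zero, add_zero]
    push_cast
    ring

lemma count_lower (n : ℕ) :
    (2/3 : ℝ) * n^3 ≤ ∑ j ∈ Finset.range n, ∑ j' ∈ Finset.range n,
        ∑ l ∈ Finset.range n, ∑ l' ∈ Finset.range n,
          (if (j:ℤ) - l = (j':ℤ) - l' then (1:ℝ) else 0) := by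
  have h1 : ∑ j ∈ Finset.range n, ∑ j' ∈ Finset.range n, ((n:ℝ) - |(j:ℝ) - j'|)
      ≤ ∑ j ∈ Finset.range n, ∑ j' ∈ Finset.range n,
        ∑ l ∈ Finset.range n, ∑ l' ∈ Finset.range n,
          (if (j:ℤ) - l = (j':ℤ) - l' then (1:ℝ) else 0) := by
    refine Finset.sum_le_sum fun j hj => Finset.sum_le_sum fun j' hj' => ?_
    exact inner_count n j j' (Finset.mem_range.mp hj) (Finset.mem_range.mp hj')
  refine le_trans ?_ h1
  have h2 : ∑ j ∈ Finset.range n, ∑ j' ∈ Finset.range n, ((n:ℝ) - |(j:ℝ) - j'|)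
      = (n:ℝ)^3 - ((n:ℝ)^3 - n)/3 := by
    rw [Finset.sum_congr rfl (fun j _ => Finset.sum_sub_distrib _ _), Finset.sum_sub_distrib]
    simp only [Finset.sum_const, Finset.card_range, nsmul_eq_mul]
    rw [sum_abs_diff]
    push_cast
    ring
  rw [h2]
  have hn : (0:ℝ) ≤ n := Nat.cast_nonneg n
  nlinarith [hn]

lemma FF_continuous (n : ℕ) : Continuous (FF n) := by
  unfold FF
  apply continuous_finset_sum
  intro j _
  apply continuous_finset_sum
  intro l _
  fun_prop

lemma FF_sq_expand (n : ℕ) (t : ℝ) :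
    (FF n t)^2 = ∑ j ∈ Finset.range n, ∑ l ∈ Finset.range n,
      ∑ j' ∈ Finset.range n, ∑ l' ∈ Finset.range n,
        Real.cos ((((j:ℤ) - l : ℤ) : ℝ) * t) * Real.cos ((((j':ℤ) - l' : ℤ) : ℝ) * t) := by
  rw [sq]
  unfold FF
  rw [Finset.sum_mul]
  refine Finset.sum_congr rfl fun j _ => ?_
  rw [Finset.sum_mul]
  refine Finset.sum_congr rfl fun l _ => ?_
  rw [Finset.mul_sum]
  refine Finset.sum_congr rfl fun j' _ => ?_
  rw [Finset.mul_sum]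

lemma integral_FF_sq_lower (n : ℕ) :
    (4*π/3) * n^3 ≤ ∫ t in (-π)..π, (FF n t)^2 := by
  have hcont : ∀ (a b : ℤ), Continuous (fun t : ℝ => Real.cos (a * t) * Real.cos (b * t)) := by
    intro a b; fun_prop
  have hexp : ∫ t in (-π)..π, (FF n t)^2
      = ∑ j ∈ Finset.range n, ∑ l ∈ Finset.range n,
          ∑ j' ∈ Finset.range n, ∑ l' ∈ Finset.range n,
            ∫ t in (-π)..π,
              Real.cos ((((j:ℤ) - l : ℤ) : ℝ) * t) * Real.cos ((((j':ℤ) - l' : ℤ) : ℝ) * t) := by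
    rw [intervalIntegral.integral_congr (g := fun t => ∑ j ∈ Finset.range n, ∑ l ∈ Finset.range n,
      ∑ j' ∈ Finset.range n, ∑ l' ∈ Finset.range n,
        Real.cos ((((j:ℤ) - l : ℤ) : ℝ) * t) * Real.cos ((((j':ℤ) - l' : ℤ) : ℝ) * t))
      (fun t _ => FF_sq_expand n t)]
    rw [intervalIntegral.integral_finset_sum (fun j _ => by
      apply Continuous.intervalIntegrable
      apply continuous_finset_sum; intro l _
      apply continuous_finset_sum; intro j' _
      apply continuous_finset_sum; intro l' _
      fun_prop)]
    refine Finset.sum_congr rfl fun j _ => ?_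
    rw [intervalIntegral.integral_finset_sum (fun l _ => by
      apply Continuous.intervalIntegrable
      apply continuous_finset_sum; intro j' _
      apply continuous_finset_sum; intro l' _
      fun_prop)]
    refine Finset.sum_congr rfl fun l _ => ?_
    rw [intervalIntegral.integral_finset_sum (fun j' _ => by
      apply Continuous.intervalIntegrable
      apply continuous_finset_sum; intro l' _
      fun_prop)]
    refine Finset.sum_congr rfl fun j' _ => ?_
    rw [intervalIntegral.integral_finset_sum (fun l' _ => (hcont _ _).intervalIntegrable _ _)]
  rw [hexp]
  have heval : ∀ j l j' l' : ℕ,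
      (∫ t in (-π)..π,
        Real.cos ((((j:ℤ) - l : ℤ) : ℝ) * t) * Real.cos ((((j':ℤ) - l' : ℤ) : ℝ) * t))
      = π * (if (j:ℤ) - l = (j':ℤ) - l' then (1:ℝ) else 0)
        + π * (if (j:ℤ) - l = (l':ℤ) - j' then (1:ℝ) else 0) := by
    intro j l j' l'
    rw [integral_cos_mul_cos_int]
    rw [if_congr (show (j:ℤ) - l = -((j':ℤ) - l') ↔ (j:ℤ) - l = (l':ℤ) - j' by omega) rfl rfl]
    split_ifs <;> ring
  simp only [heval, Finset.sum_add_distrib, ← Finset.mul_sum]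
  -- now goal: 4π/3 n³ ≤ π * S1 + π * S2
  have hswap : ∑ j ∈ Finset.range n, ∑ l ∈ Finset.range n,
      ∑ j' ∈ Finset.range n, ∑ l' ∈ Finset.range n,
        (if (j:ℤ) - l = (l':ℤ) - j' then (1:ℝ) else 0)
      = ∑ j ∈ Finset.range n, ∑ l ∈ Finset.range n,
      ∑ j' ∈ Finset.range n, ∑ l' ∈ Finset.range n,
        (if (j:ℤ) - l = (j':ℤ) - l' then (1:ℝ) else 0) := by
    refine Finset.sum_congr rfl fun j _ => Finset.sum_congr rfl fun l _ => ?_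
    exact Finset.sum_comm
  rw [hswap]
  have hS : ∑ j ∈ Finset.range n, ∑ l ∈ Finset.range n,
      ∑ j' ∈ Finset.range n, ∑ l' ∈ Finset.range n,
        (if (j:ℤ) - l = (j':ℤ) - l' then (1:ℝ) else 0)
      = ∑ j ∈ Finset.range n, ∑ j' ∈ Finset.range n,
      ∑ l ∈ Finset.range n, ∑ l' ∈ Finset.range n,
        (if (j:ℤ) - l = (j':ℤ) - l' then (1:ℝ) else 0) :=
    Finset.sum_congr rfl fun j _ => Finset.sum_comm
  rw [hS]
  have := count_lower n
  have hπ : 0 < π := Real.pi_pos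
  nlinarith [this]

lemma FF_even (n : ℕ) (t : ℝ) : FF n (-t) = FF n t := by
  unfold FF
  refine Finset.sum_congr rfl fun j _ => Finset.sum_congr rfl fun l _ => ?_
  rw [mul_neg, Real.cos_neg]

lemma moment_bound (n : ℕ) (hn : 1 ≤ n) :
    ∫ t in (-π)..π, |t| * (FF n t)^2 ≤ 2 * π^2 * n^2 := by
  have hπ : 0 < π := Real.pi_pos
  have hn0 : (0:ℝ) < n := by exact_mod_cast hn
  have hπn0 : 0 < π / n := by positivity
  have hπnπ : π / n ≤ π := by
    rw [div_le_iff₀ hn0]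
    have h1 : (1:ℝ) ≤ n := by exact_mod_cast hn
    nlinarith
  have hc : Continuous (fun t => |t| * (FF n t)^2) := by
    have := FF_continuous n
    fun_prop
  have heven : ∀ t : ℝ, |(-t)| * (FF n (-t))^2 = |t| * (FF n t)^2 := by
    intro t; rw [abs_neg, FF_even]
  rw [integral_even_pi heven hc]
  have habs : ∫ t in (0:ℝ)..π, |t| * (FF n t)^2 = ∫ t in (0:ℝ)..π, t * (FF n t)^2 := by
    apply intervalIntegral.integral_congr
    intro t ht
    rw [Set.uIcc_of_le hπ.le] at ht
    simp only
    rw [abs_of_nonneg ht.1]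
  rw [habs]
  have hcont2 : Continuous (fun t => t * (FF n t)^2) := by
    have := FF_continuous n
    fun_prop
  have hsplit : ∫ t in (0:ℝ)..π, t * (FF n t)^2
      = (∫ t in (0:ℝ)..(π/n), t * (FF n t)^2) + ∫ t in (π/n)..π, t * (FF n t)^2 :=
    (intervalIntegral.integral_add_adjacent_intervals
      (hcont2.intervalIntegrable _ _) (hcont2.intervalIntegrable _ _)).symm
  rw [hsplit]
  have hp1 : ∫ t in (0:ℝ)..(π/n), t * (FF n t)^2 ≤ π^2 * n^2 / 2 := by
    have hb : ∫ t in (0:ℝ)..(π/n), (n:ℝ)^4 * t = π^2 * n^2 / 2 := by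
      rw [intervalIntegral.integral_const_mul, integral_id]
      field_simp
      ring
    rw [← hb]
    apply intervalIntegral.integral_mono_on hπn0.le
      (hcont2.intervalIntegrable _ _)
      ((by fun_prop : Continuous (fun t : ℝ => (n:ℝ)^4 * t)).intervalIntegrable _ _)
    intro t ht
    have hFF : (FF n t)^2 ≤ (n:ℝ)^4 := by
      have h1 := FF_le_sq n t
      have h2 := FF_nonneg n t
      nlinarith
    calc t * (FF n t)^2 ≤ t * (n:ℝ)^4 := by nlinarith [ht.1]
      _ = (n:ℝ)^4 * t := by ring
  have hp2 : ∫ t in (π/n)..π, t * (FF n t)^2 ≤ π^2 * n^2 / 2 := by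
    have hzint : ∫ t in (π/n)..π, π^4 * t^(-3:ℤ) = π^4 * ((π/n)^(-2:ℤ) - π^(-2:ℤ))/2 := by
      rw [intervalIntegral.integral_const_mul, integral_zpow (by
        right
        constructor
        · norm_num
        · rw [Set.uIcc_of_le hπnπ]
          intro hmem
          exact absurd hmem.1 (by push_neg; exact hπn0))]
      norm_num
      ring
    have hb2 : π^4 * ((π/n)^(-2:ℤ) - π^(-2:ℤ))/2 ≤ π^2 * n^2 / 2 := by
      have e1 : (π/n : ℝ)^(-2:ℤ) = n^2/π^2 := by
        rw [zpow_neg, show ((2:ℤ) = (2:ℕ)) from rfl, zpow_natCast, div_pow]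
        rw [inv_div]
      have e2 : (π : ℝ)^(-2:ℤ) = 1/π^2 := by
        rw [zpow_neg, show ((2:ℤ) = (2:ℕ)) from rfl, zpow_natCast]
        exact inv_eq_one_div _
      rw [e1, e2]
      have : π^4 * (n^2/π^2 - 1/π^2) = π^2 * n^2 - π^2 := by
        field_simp
      rw [this]
      nlinarith
    rw [← ge_iff_le]
    calc π^2 * n^2/2 ≥ π^4 * ((π/n)^(-2:ℤ) - π^(-2:ℤ))/2 := hb2
      _ = ∫ t in (π/n)..π, π^4 * t^(-3:ℤ) := hzint.symm
      _ ≥ ∫ t in (π/n)..π, t * (FF n t)^2 := by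
          apply intervalIntegral.integral_mono_on hπnπ
            (hcont2.intervalIntegrable _ _)
            ((intervalIntegral.intervalIntegrable_zpow (by
                right
                rw [Set.uIcc_of_le hπnπ]
                intro hmem
                exact absurd hmem.1 (by push_neg; exact hπn0))).const_mul _)
          intro t ht
          have ht0 : 0 < t := lt_of_lt_of_le hπn0 ht.1
          have hFF : FF n t ≤ π^2/t^2 := FF_le_tail n ht0 ht.2
          have hFF0 := FF_nonneg n t
          have hsq : (FF n t)^2 ≤ (π^2/t^2)^2 := by nlinarith
          have : t * (FF n t)^2 ≤ t * (π^2/t^2)^2 := by nlinarith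
          calc t * (FF n t)^2 ≤ t * (π^2/t^2)^2 := this
            _ = π^4 * t^(-3:ℤ) := by
               rw [zpow_neg, show ((3:ℤ) = (3:ℕ)) from rfl, zpow_natCast]
               field_simp
  nlinarith [hp1, hp2]

lemma natDegree_T_le (m : ℕ) : (Polynomial.Chebyshev.T ℝ (m:ℤ)).natDegree ≤ m := by
  induction m using Nat.strong_induction_on with
  | _ m ih =>
    match m with
    | 0 => simp [Polynomial.Chebyshev.T_zero]
    | 1 => simp [Polynomial.Chebyshev.T_one, Polynomial.natDegree_X_le]
    | (k+2) =>
      have h : ((k+2 : ℕ) : ℤ) = (k:ℤ) + 2 := by push_cast; ring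
      rw [h, Polynomial.Chebyshev.T_add_two]
      refine (Polynomial.natDegree_sub_le _ _).trans (max_le ?_ ?_)
      · have h1 : (2 * Polynomial.X * Polynomial.Chebyshev.T ℝ ((k:ℤ)+1)).natDegree
            ≤ (2 * Polynomial.X : ℝ[X]).natDegree + (Polynomial.Chebyshev.T ℝ ((k:ℤ)+1)).natDegree :=
          Polynomial.natDegree_mul_le
        have h2 : (2 * Polynomial.X : ℝ[X]).natDegree ≤ 1 := by
          refine Polynomial.natDegree_mul_le.trans ?_
          have : (2 : ℝ[X]).natDegree = 0 := Polynomial.natDegree_ofNat 2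
          have := Polynomial.natDegree_X_le (R := ℝ)
          omega
        have h3 : (Polynomial.Chebyshev.T ℝ ((k:ℤ)+1)).natDegree ≤ k+1 := by
          have := ih (k+1) (by omega)
          rwa [show ((k+1:ℕ):ℤ) = (k:ℤ)+1 by push_cast; ring] at this
        omega
      · exact (ih k (by omega)).trans (by omega)

lemma natDegree_T_le_natAbs (k : ℤ) : (Polynomial.Chebyshev.T ℝ k).natDegree ≤ k.natAbs := by
  rw [← Polynomial.Chebyshev.T_natAbs]
  exact natDegree_T_le _

lemma key (L : ℝ) (hL : 0 < L) (g : ℝ → ℝ)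
    (hg : ∀ a b : ℝ, |g a - g b| ≤ L/2 * |a - b|)
    (hgper : ∀ s, g (s + 2*π) = g s)
    (hgeven : ∀ s, g (-s) = g s)
    (n : ℕ) (hn : 1 ≤ n) :
    ∃ p : Polynomial ℝ, p.natDegree ≤ 2*n - 2 ∧
      ∀ θ : ℝ, |g θ - p.eval (Real.cos θ)| ≤ (3*π/4) * L / n := by
  have hπ : 0 < π := Real.pi_pos
  have hn0 : (0:ℝ) < n := by exact_mod_cast hn
  -- continuity of g
  have hgc : Continuous g := by
    have hlip : LipschitzWith (Real.toNNReal (L/2)) g := by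
      apply LipschitzWith.of_dist_le_mul
      intro a b
      rw [Real.dist_eq, Real.dist_eq, Real.coe_toNNReal _ (by positivity)]
      exact hg a b
    exact hlip.continuous
  set I := ∫ t in (-π)..π, (FF n t)^2 with hIdef
  have hIlb : (4*π/3) * n^3 ≤ I := integral_FF_sq_lower n
  have hI0 : 0 < I := lt_of_lt_of_le (by positivity) hIlb
  set ca : ℤ → ℝ := fun k => ∫ s in (-π)..π, g s * Real.cos (k*s) with hcadef
  -- the shift lemma
  have hshift : ∀ (k:ℤ) (θ:ℝ),
      (∫ t in (-π)..π, g (θ+t) * Real.cos (k*t)) = Real.cos (k*θ) * ca k := by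
    intro k θ
    have hstep1 : (∫ t in (-π)..π, g (θ+t) * Real.cos (k*t))
        = ∫ s in (-π+θ)..(π+θ), g s * Real.cos (k*(s-θ)) := by
      have := intervalIntegral.integral_comp_add_right (a := -π) (b := π)
        (fun s => g s * Real.cos (k*(s-θ))) θ
      rw [← this]
      apply intervalIntegral.integral_congr
      intro t _
      simp only
      rw [add_comm t θ]
      congr 2
      ring
    have hper : Function.Periodic (fun s => g s * Real.cos (k*(s-θ))) (2*π) := by
      intro s
      simp only
      rw [hgper]
      congr 1
      rw [show (k:ℝ)*(s + 2*π - θ) = k*(s-θ) + k*(2*π) by ring]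
      exact Real.cos_add_int_mul_two_pi _ k
    have hstep2 : (∫ s in (-π+θ)..(π+θ), g s * Real.cos (k*(s-θ)))
        = ∫ s in (-π)..π, g s * Real.cos (k*(s-θ)) := by
      have h2 := hper.intervalIntegral_add_eq (-π+θ) (-π)
      rw [show -π+θ+2*π = π+θ by ring, show -π+2*π = π by ring] at h2
      exact h2
    have hstep3 : (∫ s in (-π)..π, g s * Real.cos (k*(s-θ)))
        = Real.cos (k*θ) * ca k := by
      have hpt : ∀ s, g s * Real.cos (k*(s-θ))
          = Real.cos (k*θ) * (g s * Real.cos (k*s)) + Real.sin (k*θ) * (g s * Real.sin (k*s)) := by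
        intro s
        rw [show (k:ℝ)*(s-θ) = k*s - k*θ by ring, Real.cos_sub]
        ring
      rw [intervalIntegral.integral_congr (g := fun s =>
        Real.cos (k*θ) * (g s * Real.cos (k*s)) + Real.sin (k*θ) * (g s * Real.sin (k*s)))
        (fun s _ => hpt s)]
      have i1 : IntervalIntegrable (fun s => Real.cos (k*θ) * (g s * Real.cos (k*s)))
          MeasureTheory.volume (-π) π := by
        apply Continuous.intervalIntegrable
        fun_prop
      have i2 : IntervalIntegrable (fun s => Real.sin (k*θ) * (g s * Real.sin (k*s)))
          MeasureTheory.volume (-π) π := by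
        apply Continuous.intervalIntegrable
        fun_prop
      rw [intervalIntegral.integral_add i1 i2, intervalIntegral.integral_const_mul,
        intervalIntegral.integral_const_mul]
      have hodd : (∫ s in (-π)..π, g s * Real.sin (k*s)) = 0 := by
        apply integral_odd_pi
        intro s
        rw [hgeven, mul_neg, Real.sin_neg]
        ring
      rw [hodd]
      ring
    rw [hstep1, hstep2, hstep3]
  -- the polynomial
  set p : Polynomial ℝ := ∑ j ∈ Finset.range n, ∑ l ∈ Finset.range n,
      ∑ j' ∈ Finset.range n, ∑ l' ∈ Finset.range n,
        (Polynomial.C (ca (((j:ℤ)-l) + ((j':ℤ)-l')) / (2*I)) *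
          Polynomial.Chebyshev.T ℝ (((j:ℤ)-l) + ((j':ℤ)-l'))
        + Polynomial.C (ca (((j:ℤ)-l) - ((j':ℤ)-l')) / (2*I)) *
          Polynomial.Chebyshev.T ℝ (((j:ℤ)-l) - ((j':ℤ)-l'))) with hpdef
  refine ⟨p, ?_, ?_⟩
  · -- degree bound
    apply Polynomial.natDegree_sum_le_of_forall_le
    intro j hj
    apply Polynomial.natDegree_sum_le_of_forall_le
    intro l hl
    apply Polynomial.natDegree_sum_le_of_forall_le
    intro j' hj'
    apply Polynomial.natDegree_sum_le_of_forall_le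
    intro l' hl'
    rw [Finset.mem_range] at hj hl hj' hl'
    refine (Polynomial.natDegree_add_le _ _).trans (max_le ?_ ?_) <;>
    · refine (Polynomial.natDegree_C_mul_le _ _).trans ((natDegree_T_le_natAbs _).trans ?_)
      omega
  · -- error bound
    intro θ
    -- eval identity
    have heval : p.eval (Real.cos θ) = (1/I) * ∫ t in (-π)..π, g (θ+t) * (FF n t)^2 := by
      have hexp : (∫ t in (-π)..π, g (θ+t) * (FF n t)^2)
          = ∑ j ∈ Finset.range n, ∑ l ∈ Finset.range n,
              ∑ j' ∈ Finset.range n, ∑ l' ∈ Finset.range n,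
                ∫ t in (-π)..π, (1/2) *
                  (g (θ+t) * Real.cos (((((j:ℤ)-l) + ((j':ℤ)-l') : ℤ):ℝ) * t)
                   + g (θ+t) * Real.cos (((((j:ℤ)-l) - ((j':ℤ)-l') : ℤ):ℝ) * t)) := by
        have hptw : ∀ t : ℝ, g (θ+t) * (FF n t)^2
            = ∑ j ∈ Finset.range n, ∑ l ∈ Finset.range n,
                ∑ j' ∈ Finset.range n, ∑ l' ∈ Finset.range n, (1/2) *
                  (g (θ+t) * Real.cos (((((j:ℤ)-l) + ((j':ℤ)-l') : ℤ):ℝ) * t)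
                   + g (θ+t) * Real.cos (((((j:ℤ)-l) - ((j':ℤ)-l') : ℤ):ℝ) * t)) := by
          intro t
          rw [FF_sq_expand n t, Finset.mul_sum]
          refine Finset.sum_congr rfl fun j _ => ?_
          rw [Finset.mul_sum]
          refine Finset.sum_congr rfl fun l _ => ?_
          rw [Finset.mul_sum]
          refine Finset.sum_congr rfl fun j' _ => ?_
          rw [Finset.mul_sum]
          refine Finset.sum_congr rfl fun l' _ => ?_
          have hprod : ∀ A B : ℝ, Real.cos A * Real.cos B
              = (Real.cos (A+B) + Real.cos (A-B))/2 := by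
            intro A B
            rw [Real.cos_add, Real.cos_sub]
            ring
          have hcast1 : (((((j:ℤ)-l) + ((j':ℤ)-l') : ℤ):ℝ)) * t
              = (((j:ℤ) - l : ℤ) : ℝ) * t + (((j':ℤ) - l' : ℤ) : ℝ) * t := by
            push_cast; ring
          have hcast2 : (((((j:ℤ)-l) - ((j':ℤ)-l') : ℤ):ℝ)) * t
              = (((j:ℤ) - l : ℤ) : ℝ) * t - (((j':ℤ) - l' : ℤ) : ℝ) * t := by
            push_cast; ring
          rw [hcast1, hcast2, hprod]
          ring
        rw [intervalIntegral.integral_congr (fun t _ => hptw t)]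
        rw [intervalIntegral.integral_finset_sum (fun j _ => by
          apply Continuous.intervalIntegrable
          apply continuous_finset_sum; intro l _
          apply continuous_finset_sum; intro j' _
          apply continuous_finset_sum; intro l' _
          fun_prop)]
        refine Finset.sum_congr rfl fun j _ => ?_
        rw [intervalIntegral.integral_finset_sum (fun l _ => by
          apply Continuous.intervalIntegrable
          apply continuous_finset_sum; intro j' _
          apply continuous_finset_sum; intro l' _
          fun_prop)]
        refine Finset.sum_congr rfl fun l _ => ?_
        rw [intervalIntegral.integral_finset_sum (fun j' _ => by
          apply Continuous.intervalIntegrable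
          apply continuous_finset_sum; intro l' _
          fun_prop)]
        refine Finset.sum_congr rfl fun j' _ => ?_
        rw [intervalIntegral.integral_finset_sum (fun l' _ => by
          apply Continuous.intervalIntegrable
          fun_prop)]
      rw [hexp, hpdef]
      rw [Polynomial.eval_finset_sum, Finset.mul_sum]
      refine Finset.sum_congr rfl fun j _ => ?_
      rw [Polynomial.eval_finset_sum, Finset.mul_sum]
      refine Finset.sum_congr rfl fun l _ => ?_
      rw [Polynomial.eval_finset_sum, Finset.mul_sum]
      refine Finset.sum_congr rfl fun j' _ => ?_
      rw [Polynomial.eval_finset_sum, Finset.mul_sum]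
      refine Finset.sum_congr rfl fun l' _ => ?_
      rw [Polynomial.eval_add, Polynomial.eval_mul, Polynomial.eval_mul,
        Polynomial.eval_C, Polynomial.eval_C,
        Polynomial.Chebyshev.T_real_cos, Polynomial.Chebyshev.T_real_cos]
      have hi1 : IntervalIntegrable
          (fun t => g (θ+t) * Real.cos (((((j:ℤ)-l) + ((j':ℤ)-l') : ℤ):ℝ) * t))
          MeasureTheory.volume (-π) π := by
        apply Continuous.intervalIntegrable; fun_prop
      have hi2 : IntervalIntegrable
          (fun t => g (θ+t) * Real.cos (((((j:ℤ)-l) - ((j':ℤ)-l') : ℤ):ℝ) * t))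
          MeasureTheory.volume (-π) π := by
        apply Continuous.intervalIntegrable; fun_prop
      rw [intervalIntegral.integral_const_mul, intervalIntegral.integral_add hi1 hi2,
        hshift (((j:ℤ)-l) + ((j':ℤ)-l')) θ, hshift (((j:ℤ)-l) - ((j':ℤ)-l')) θ]
      field_simp
    -- error estimate
    have hgself : g θ = (1/I) * ∫ t in (-π)..π, g θ * (FF n t)^2 := by
      rw [intervalIntegral.integral_const_mul, ← hIdef]
      field_simp
    rw [heval, hgself]
    have hdiffint : (1/I) * (∫ t in (-π)..π, g θ * (FF n t)^2)
        - (1/I) * (∫ t in (-π)..π, g (θ+t) * (FF n t)^2)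
        = (1/I) * ∫ t in (-π)..π, (g θ - g (θ+t)) * (FF n t)^2 := by
      rw [← mul_sub, ← intervalIntegral.integral_sub
        ((by have := FF_continuous n; fun_prop : Continuous (fun t => g θ * (FF n t)^2)).intervalIntegrable _ _)
        ((by have := FF_continuous n; fun_prop : Continuous (fun t => g (θ+t) * (FF n t)^2)).intervalIntegrable _ _)]
      congr 1
      apply intervalIntegral.integral_congr
      intro t _
      ring
    rw [hdiffint]
    have habs : |(1/I) * ∫ t in (-π)..π, (g θ - g (θ+t)) * (FF n t)^2|
        ≤ (1/I) * (L/2 * (2 * π^2 * n^2)) := by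
      rw [abs_mul, abs_of_pos (by positivity : (0:ℝ) < 1/I)]
      apply mul_le_mul_of_nonneg_left _ (by positivity : (0:ℝ) ≤ 1/I)
      calc |∫ t in (-π)..π, (g θ - g (θ+t)) * (FF n t)^2|
          ≤ ∫ t in (-π)..π, |(g θ - g (θ+t)) * (FF n t)^2| :=
            intervalIntegral.abs_integral_le_integral_abs (by linarith)
        _ ≤ ∫ t in (-π)..π, L/2 * (|t| * (FF n t)^2) := by
            apply intervalIntegral.integral_mono_on (by linarith)
            · apply Continuous.intervalIntegrable
              have := FF_continuous n
              fun_prop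
            · apply Continuous.intervalIntegrable
              have := FF_continuous n
              fun_prop
            · intro t _
              rw [abs_mul, abs_of_nonneg (sq_nonneg (FF n t))]
              have h1 : |g θ - g (θ+t)| ≤ L/2 * |t| := by
                have := hg θ (θ+t)
                rw [show θ - (θ+t) = -t by ring, abs_neg] at this
                exact this
              have h2 : (0:ℝ) ≤ (FF n t)^2 := sq_nonneg _
              calc |g θ - g (θ+t)| * (FF n t)^2 ≤ (L/2 * |t|) * (FF n t)^2 :=
                    mul_le_mul_of_nonneg_right h1 h2
                _ = L/2 * (|t| * (FF n t)^2) := by ring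
        _ = L/2 * ∫ t in (-π)..π, |t| * (FF n t)^2 := intervalIntegral.integral_const_mul _ _
        _ ≤ L/2 * (2 * π^2 * n^2) := by
            apply mul_le_mul_of_nonneg_left (moment_bound n hn) (by positivity)
    refine habs.trans ?_
    -- arithmetic: (1/I) * (L/2 * 2π²n²) ≤ 3π/4 L / n  given I ≥ 4π/3 n³
    have harith : (1/I) * (L/2 * (2 * π^2 * n^2)) = L * π^2 * n^2 / I := by ring
    rw [harith]
    rw [div_le_div_iff₀ hI0 hn0]
    have hmul := mul_le_mul_of_nonneg_left hIlb (show (0:ℝ) ≤ 3*π/4*L by positivity)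
    calc L * π^2 * (n:ℝ)^2 * n = 3*π/4*L * (4*π/3 * (n:ℝ)^3) := by ring
      _ ≤ 3*π/4*L * I := hmul

lemma abs_cos_sub_cos_le (a b : ℝ) : |Real.cos a - Real.cos b| ≤ |a - b| := by
  rw [Real.cos_sub_cos]
  rw [abs_mul, abs_mul]
  have h1 : |Real.sin ((a+b)/2)| ≤ 1 := Real.abs_sin_le_one _
  have h2 : |Real.sin ((a-b)/2)| ≤ |(a-b)/2| := Real.abs_sin_le_abs
  have h3 : |(-2 : ℝ)| = 2 := by norm_num
  rw [h3]
  calc 2 * |Real.sin ((a+b)/2)| * |Real.sin ((a-b)/2)|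
      ≤ 2 * 1 * |(a-b)/2| := by
        apply mul_le_mul _ h2 (abs_nonneg _) (by norm_num)
        nlinarith [abs_nonneg (Real.sin ((a+b)/2))]
    _ = |a - b| := by
        rw [mul_one, abs_div, abs_two]
        ring

/-- Any `L`-Lipschitz function on `[0,1]` can be uniformly approximated within `ε/2`
by a polynomial of degree at most `⌈12L/ε⌉`. -/
theorem lipschitz_poly_approx (L ε : ℝ) (hL : 0 < L) (hε : 0 < ε)
    (f : ℝ → ℝ)
    (hf : ∀ x ∈ Set.Icc (0:ℝ) 1, ∀ y ∈ Set.Icc (0:ℝ) 1, |f x - f y| ≤ L * |x - y|) :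
    ∃ q : Polynomial ℝ, q.natDegree ≤ ⌈12 * L / ε⌉₊ ∧
      ∀ x ∈ Set.Icc (0:ℝ) 1, |f x - q.eval x| ≤ ε / 2 := by
  have hπ : 0 < π := Real.pi_pos
  set n : ℕ := ⌈3*π*L/(2*ε)⌉₊ with hndef
  have hpos : (0:ℝ) < 3*π*L/(2*ε) := by positivity
  have hn1 : 1 ≤ n := Nat.one_le_iff_ne_zero.mpr (by
    intro h
    have := Nat.ceil_eq_zero.mp h
    linarith)
  have hn0 : (0:ℝ) < n := by exact_mod_cast hn1
  have hnlb : 3*π*L/(2*ε) ≤ n := Nat.le_ceil _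
  have hnub : (n:ℝ) < 3*π*L/(2*ε) + 1 := Nat.ceil_lt_add_one hpos.le
  -- the transferred function
  set g : ℝ → ℝ := fun θ => f ((1 + Real.cos θ)/2) with hgdef
  have hmem : ∀ θ : ℝ, (1 + Real.cos θ)/2 ∈ Set.Icc (0:ℝ) 1 := by
    intro θ
    constructor
    · nlinarith [Real.neg_one_le_cos θ]
    · nlinarith [Real.cos_le_one θ]
  have hg : ∀ a b : ℝ, |g a - g b| ≤ L/2 * |a - b| := by
    intro a b
    calc |g a - g b| ≤ L * |(1 + Real.cos a)/2 - (1 + Real.cos b)/2| :=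
          hf _ (hmem a) _ (hmem b)
      _ = L/2 * |Real.cos a - Real.cos b| := by
          rw [show (1 + Real.cos a)/2 - (1 + Real.cos b)/2 = (Real.cos a - Real.cos b)/2 by ring,
            abs_div]
          norm_num
          ring
      _ ≤ L/2 * |a - b| := by
          apply mul_le_mul_of_nonneg_left (_root_.abs_cos_sub_cos_le a b) (by positivity)
  have hgper : ∀ s, g (s + 2*π) = g s := by
    intro s; simp only [hgdef, Real.cos_add_two_pi]
  have hgeven : ∀ s, g (-s) = g s := by
    intro s; simp only [hgdef, Real.cos_neg]
  obtain ⟨p, hpdeg, hperr⟩ := key L hL g hg hgper hgeven n hn1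
  refine ⟨p.comp (Polynomial.C 2 * Polynomial.X - Polynomial.C 1), ?_, ?_⟩
  · -- degree
    have hdeg1 : (Polynomial.C (2:ℝ) * Polynomial.X - Polynomial.C 1).natDegree ≤ 1 := by
      refine (Polynomial.natDegree_sub_le _ _).trans (max_le ?_ ?_)
      · exact (Polynomial.natDegree_C_mul_le _ _).trans Polynomial.natDegree_X_le
      · simp
    have hcomp : (p.comp (Polynomial.C 2 * Polynomial.X - Polynomial.C 1)).natDegree
        ≤ (2*n-2) * 1 :=
      Polynomial.natDegree_comp_le.trans (Nat.mul_le_mul hpdeg hdeg1)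
    rw [mul_one] at hcomp
    refine hcomp.trans ?_
    -- 2n-2 ≤ ⌈12 L / ε⌉₊
    have hreal : ((2*n - 2 : ℕ) : ℝ) ≤ 12 * L / ε := by
      have hcast : ((2*n - 2 : ℕ) : ℝ) = 2*(n:ℝ) - 2 := by
        have : 2 ≤ 2*n := by omega
        push_cast [Nat.cast_sub this]
        ring
      rw [hcast]
      have hπ4 : π ≤ 4 := by
        have := Real.pi_le_four
        linarith
      have h1 : 2*(n:ℝ) - 2 < 3*π*L/ε := by
        have := hnub
        have : 2*(n:ℝ) < 3*π*L/ε + 2 := by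
          calc 2*(n:ℝ) < 2*(3*π*L/(2*ε) + 1) := by linarith
            _ = 3*π*L/ε + 2 := by field_simp
        linarith
      have h2 : 3*π*L/ε ≤ 12*L/ε := by
        rw [div_le_div_iff₀ hε hε]
        nlinarith [mul_nonneg (mul_nonneg (sub_nonneg.mpr hπ4) hL.le) hε.le]
      linarith
    have := Nat.le_ceil (12 * L / ε)
    exact_mod_cast hreal.trans this
  · -- error
    intro x hx
    have hx1 : -1 ≤ 2*x - 1 := by linarith [hx.1]
    have hx2 : 2*x - 1 ≤ 1 := by linarith [hx.2]
    have hcosθ : Real.cos (Real.arccos (2*x-1)) = 2*x - 1 := Real.cos_arccos hx1 hx2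
    have heval : (p.comp (Polynomial.C 2 * Polynomial.X - Polynomial.C 1)).eval x
        = p.eval (Real.cos (Real.arccos (2*x-1))) := by
      rw [Polynomial.eval_comp]
      simp [hcosθ]
    have hgx : g (Real.arccos (2*x-1)) = f x := by
      simp only [hgdef, hcosθ]
      congr 1
      ring
    rw [heval, ← hgx]
    refine (hperr _).trans ?_
    -- (3π/4) L / n ≤ ε/2
    rw [div_le_iff₀ hn0]
    have h := mul_le_mul_of_nonneg_left hnlb (show (0:ℝ) ≤ ε/2 by positivity)
    calc 3*π/4 * L = ε/2 * (3*π*L/(2*ε)) := by field_simp; ring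
      _ ≤ ε/2 * n := h
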